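/- Let B ⊆ ℝⁿ be a nonempty open connected set, ψ a continuous real-valued function on B, 0 < s < ∞, and F ∈ A^{1,s}(B,ψ). If f : ℝⁿ → ℂ is the continuous function with F(z) = ∫_{ℝⁿ} f(t) e^{2πi t·z} dt for all z ∈ T_B (with t ↦ f(t)e^{−2π y·t} integrable for each y ∈ B), then f(t) = 0 for every t ∉ U_s(B,ψ); that is, the support of f is contained in U_s(B,ψ). -/

import Mathlib

open MeasureTheory Real Filter Set Metric
open scoped ENNReal Topology Pointwise

noncomputable section

/-- Real points of `ℝⁿ` (Euclidean). -/
abbrev RS (n : ℕ) := EuclideanSpace ℝ (Fin n)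
/-- Complex points of `ℂⁿ` (Euclidean). -/
abbrev CS (n : ℕ) := EuclideanSpace ℂ (Fin n)

/-- The point `z = x + i y` of `ℂⁿ`. -/
def tmk {n : ℕ} (x y : RS n) : CS n :=
  (WithLp.equiv 2 (Fin n → ℂ)).symm fun j => (x j : ℂ) + (y j : ℂ) * Complex.I

/-- The tube `T_B = ℝⁿ + iB` over a base `B ⊆ ℝⁿ`. -/
def tube {n : ℕ} (B : Set (RS n)) : Set (CS n) :=
  {z | ((WithLp.equiv 2 (Fin n → ℝ)).symm fun j => (z j).im) ∈ B}

/-- Real dot product `t ⬝ y`. -/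
def rdot {n : ℕ} (t y : RS n) : ℝ := ∑ j, t j * y j

/-- Complex bilinear pairing `t ⬝ z` of a real vector with a complex vector. -/
def cdot {n : ℕ} (t : RS n) (z : CS n) : ℂ := ∑ j, (t j : ℂ) * z j

/-- The `A^{p,s}(B,ψ)`-norm, valued in `ℝ≥0∞`:
`(∫_B (∫_{ℝⁿ} |F(x+iy) e^{−2πψ(y)}|^p dx)^s dy)^{1/(sp)}`. -/
def AnormE {n : ℕ} (F : CS n → ℂ) (B : Set (RS n)) (ψ : RS n → ℝ) (p s : ℝ) : ℝ≥0∞ :=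
  (∫⁻ y in B, (∫⁻ x, ENNReal.ofReal
      ((‖F (tmk x y)‖ * Real.exp (-(2 * Real.pi * ψ y))) ^ p)) ^ s) ^ (1 / (s * p))

/-- Membership in the weighted Bergman space `A^{p,s}(B,ψ)`. -/
def MemA {n : ℕ} (F : CS n → ℂ) (B : Set (RS n)) (ψ : RS n → ℝ) (p s : ℝ) : Prop :=
  DifferentiableOn ℂ F (tube B) ∧ AnormE F B ψ p s < ⊤

/-- The set `U_α(B,ψ) = {t ∈ ℝⁿ : ∫_B e^{−2πα(t·y + ψ(y))} dy < ∞}`. -/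
def Uset {n : ℕ} (B : Set (RS n)) (ψ : RS n → ℝ) (α : ℝ) : Set (RS n) :=
  {t | ∫⁻ y in B, ENNReal.ofReal (Real.exp (-(2 * Real.pi * α * (rdot t y + ψ y)))) < ⊤}

lemma tmk_mem_tube {n : ℕ} {B : Set (RS n)} (x : RS n) {y : RS n} (hy : y ∈ B) : tmk x y ∈ tube B := by
  simp only [tube, tmk, mem_setOf_eq]
  convert hy using 2
  ext j
  simp

lemma cdot_tmk {n : ℕ} (v x y : RS n) :
    cdot v (tmk x y) = (rdot v x : ℂ) + (rdot v y : ℂ) * Complex.I := by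
  simp only [cdot, tmk, rdot, WithLp.equiv_symm_apply, PiLp.toLp_apply]
  push_cast
  rw [Finset.sum_mul]
  rw [← Finset.sum_add_distrib]
  congr 1; ext j; ring

example (a b : ℝ) (c : ℂ) :
    Complex.exp (↑(2 * π * a) * Complex.I) • (Real.exp (-(2 * π * b)) • c)
    = c * Complex.exp (2 * (π:ℂ) * Complex.I * (↑a + ↑b * Complex.I)) := by
  have harg : (↑(2 * π * a) * Complex.I) + ↑(-(2 * π * b)) = 2 * (π:ℂ) * Complex.I * (↑a + ↑b * Complex.I) := by
    push_cast
    linear_combination (-2*(π:ℂ)*(b:ℂ)) * Complex.I_sq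
  rw [smul_eq_mul, Complex.real_smul, Complex.ofReal_exp, ← mul_assoc, ← Complex.exp_add, harg, mul_comm]

example {n : ℕ} (v x : RS n) : (inner ℝ v x : ℝ) = rdot v x := by
  simp [PiLp.inner_apply, rdot, RCLike.inner_apply, conj_trivial, mul_comm]

lemma key_exp (a b : ℝ) (c : ℂ) :
    Complex.exp (↑(2 * π * a) * Complex.I) • (Real.exp (-(2 * π * b)) • c)
    = c * Complex.exp (2 * (π:ℂ) * Complex.I * (↑a + ↑b * Complex.I)) := by
  have harg : (↑(2 * π * a) * Complex.I) + ↑(-(2 * π * b)) = 2 * (π:ℂ) * Complex.I * (↑a + ↑b * Complex.I) := by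
    push_cast
    linear_combination (-2*(π:ℂ)*(b:ℂ)) * Complex.I_sq
  rw [smul_eq_mul, Complex.real_smul, Complex.ofReal_exp, ← mul_assoc, ← Complex.exp_add, harg, mul_comm]

open scoped FourierTransform in
lemma fourier_bound {n : ℕ} {B : Set (RS n)} {F : CS n → ℂ} {f : RS n → ℂ} (hf : Continuous f)
    (hrep : ∀ z ∈ tube B, F z = ∫ t, f t * Complex.exp (2 * (Real.pi:ℂ) * Complex.I * cdot t z))
    {y : RS n} (hy : y ∈ B) (hg : Integrable (fun t => Real.exp (-(2 * Real.pi * rdot y t)) • f t))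
    (hfin : Integrable (fun x : RS n => F (tmk x y))) (t : RS n) :
    Real.exp (-(2 * Real.pi * rdot y t)) * ‖f t‖ ≤ ∫ x, ‖F (tmk x y)‖ := by
  set g : RS n → ℂ := fun t => Real.exp (-(2 * Real.pi * rdot y t)) • f t with hgdef
  have hgc : Continuous g := by
    simp only [hgdef]
    unfold rdot; fun_prop
  have hFinv : 𝓕⁻ g = fun x => F (tmk x y) := by
    ext x
    rw [Real.fourierInv_eq', hrep _ (tmk_mem_tube x hy)]
    congr 1; ext v
    have h1 : (inner ℝ v x : ℝ) = rdot v x := by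
      simp [PiLp.inner_apply, rdot, RCLike.inner_apply, conj_trivial, mul_comm]
    have h2 : rdot y v = rdot v y := by simp [rdot, mul_comm]
    simp only [hgdef, h1, h2, cdot_tmk]
    exact key_exp (rdot v x) (rdot v y) (f v)
  have hFg : 𝓕 g = fun x => F (tmk (-x) y) := by
    ext x
    have := Real.fourierInv_eq_fourier_neg g (-x)
    rw [neg_neg] at this
    rw [← this, hFinv]
  have hFgi : Integrable (𝓕 g) := by rw [hFg]; exact hfin.comp_neg
  have hinv : 𝓕⁻ (𝓕 g) t = g t := hg.fourierInv_fourier_eq hFgi hgc.continuousAt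
  have hb : ‖𝓕⁻ (𝓕 g) t‖ ≤ ∫ x, ‖𝓕 g x‖ :=
    VectorFourier.norm_fourierIntegral_le_integral_norm _ _ _ _ _
  rw [hinv] at hb
  have hnorm : ‖g t‖ = Real.exp (-(2 * Real.pi * rdot y t)) * ‖f t‖ := by
    simp only [hgdef]
    rw [norm_smul, Real.norm_eq_abs, Real.abs_exp]
  rw [hnorm] at hb
  calc Real.exp (-(2 * Real.pi * rdot y t)) * ‖f t‖ ≤ ∫ x, ‖𝓕 g x‖ := hb
    _ = ∫ x, ‖F (tmk x y)‖ := by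
        rw [hFg, ← integral_neg_eq_self (fun x => ‖F (tmk x y)‖) volume]


lemma continuous_tmk {n : ℕ} (y : RS n) : Continuous fun x : RS n => tmk x y := by
  unfold tmk
  apply Continuous.comp (PiLp.continuous_toLp 2 (fun _ : Fin n => ℂ))
  exact continuous_pi fun j => by fun_prop


/-- Theorem 1 of the paper, support claim for `p = 1`: the density of an
`A^{1,s}(B,ψ)` function is supported in `U_s(B,ψ)`. -/
theorem statement2 {n : ℕ} (B : Set (RS n)) (hBne : B.Nonempty) (hBo : IsOpen B)
    (hBc : IsConnected B) (ψ : RS n → ℝ) (hψ : ContinuousOn ψ B)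
    (s : ℝ) (hs : 0 < s) (F : CS n → ℂ) (hF : MemA F B ψ 1 s)
    (f : RS n → ℂ) (hf : Continuous f)
    (hint : ∀ y ∈ B, Integrable (fun t => Real.exp (-(2 * Real.pi * rdot y t)) • f t))
    (hrep : ∀ z ∈ tube B,
      F z = ∫ t, f t * Complex.exp (2 * (Real.pi : ℂ) * Complex.I * cdot t z)) :
    ∀ t ∉ Uset B ψ s, f t = 0 := by
  intro t ht
  by_contra hft
  obtain ⟨hFd, hFnorm⟩ := hF
  have htubeo : IsOpen (tube B) := by
    have : Continuous fun (z : CS n) => ((WithLp.equiv 2 (Fin n → ℝ)).symm fun j => (z j).im) := by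
      apply Continuous.comp
      · exact PiLp.continuous_toLp 2 (fun _ : Fin n => ℝ)
      · exact continuous_pi fun j => Complex.continuous_im.comp
          ((continuous_apply j).comp (PiLp.continuous_ofLp 2 (fun _ : Fin n => ℂ)))
    exact hBo.preimage this
  set I : RS n → ℝ≥0∞ := fun y => ∫⁻ x, ENNReal.ofReal
      ((‖F (tmk x y)‖ * Real.exp (-(2 * Real.pi * ψ y))) ^ (1:ℝ)) with hIdef
  have hbase : (∫⁻ y in B, (I y) ^ s) < ⊤ := by
    rw [AnormE] at hFnorm
    exact (ENNReal.rpow_lt_top_iff_of_pos (by positivity)).mp hFnorm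
  set c : ℝ≥0∞ := ENNReal.ofReal (‖f t‖) ^ s with hcdef
  have habs : 0 < ‖f t‖ := by
    simpa [norm_pos_iff] using hft
  have hc0 : c ≠ 0 := by
    apply ne_of_gt
    apply ENNReal.rpow_pos (by simpa using habs) ENNReal.ofReal_ne_top
  have hctop : c ≠ ⊤ := by
    exact (ENNReal.rpow_lt_top_of_nonneg hs.le ENNReal.ofReal_ne_top).ne
  have claim : ∀ y ∈ B,
      ENNReal.ofReal (Real.exp (-(2 * Real.pi * s * (rdot t y + ψ y)))) * c ≤ (I y) ^ s := by
    intro y hy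
    set e : ℝ := Real.exp (-(2 * Real.pi * ψ y)) with hedef
    have he : 0 < e := Real.exp_pos _
    set J : ℝ≥0∞ := ∫⁻ x, ENNReal.ofReal (‖F (tmk x y)‖) with hJdef
    have hIJ : I y = J * ENNReal.ofReal e := by
      rw [hIdef]
      simp only [Real.rpow_one]
      rw [hJdef, ← lintegral_mul_const' _ _ ENNReal.ofReal_ne_top]
      congr 1; ext x
      rw [← ENNReal.ofReal_mul (norm_nonneg _)]
    rcases eq_or_ne J ⊤ with hJt | hJt
    · have : I y = ⊤ := by
        rw [hIJ, hJt, ENNReal.top_mul (ENNReal.ofReal_pos.mpr he).ne']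
      rw [this, ENNReal.top_rpow_of_pos hs]
      exact le_top
    · -- J finite: F(·+iy) integrable
      have hco : Continuous fun x : RS n => F (tmk x y) := by
        refine continuous_iff_continuousAt.mpr fun x => ContinuousAt.comp ?_ (continuous_tmk y).continuousAt
        exact (hFd.continuousOn.continuousAt (htubeo.mem_nhds (tmk_mem_tube x hy)))
      have hfin : Integrable (fun x : RS n => F (tmk x y)) := by
        refine ⟨hco.aestronglyMeasurable, ?_⟩
        rw [hasFiniteIntegral_iff_norm]
        simpa [hJdef] using hJt.lt_top
      have hb := fourier_bound hf hrep hy (hint y hy) hfin t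
      have hR : ∫ x, ‖F (tmk x y)‖ = J.toReal := by
        rw [integral_eq_lintegral_of_nonneg_ae (ae_of_all _ fun x => norm_nonneg _)
          (continuous_norm.comp hco).aestronglyMeasurable]
      rw [hR] at hb
      have hrd : rdot y t = rdot t y := by simp [rdot, mul_comm]
      rw [hrd] at hb
      -- multiply by e > 0
      have hb2 : ‖f t‖ * Real.exp (-(2 * Real.pi * (rdot t y + ψ y))) ≤ (I y).toReal := by
        have hIt : (I y).toReal = J.toReal * e := by
          rw [hIJ, ENNReal.toReal_mul, ENNReal.toReal_ofReal he.le]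
        rw [hIt]
        calc ‖f t‖ * Real.exp (-(2 * Real.pi * (rdot t y + ψ y)))
            = (Real.exp (-(2 * Real.pi * rdot t y)) * ‖f t‖) * e := by
              rw [hedef, show (-(2*Real.pi*(rdot t y + ψ y))) = (-(2*Real.pi*rdot t y)) + (-(2*Real.pi*ψ y)) by ring, Real.exp_add]; ring
          _ ≤ J.toReal * e := by
              apply mul_le_mul_of_nonneg_right hb he.le
      -- raise to power s
      have hb3 : (‖f t‖ * Real.exp (-(2 * Real.pi * (rdot t y + ψ y)))) ^ s
          ≤ (I y).toReal ^ s := Real.rpow_le_rpow (by positivity) hb2 hs.le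
      have hItop : I y ≠ ⊤ := by
        rw [hIJ]
        exact ENNReal.mul_ne_top hJt ENNReal.ofReal_ne_top
      have hlhs : ENNReal.ofReal ((‖f t‖ * Real.exp (-(2 * Real.pi * (rdot t y + ψ y)))) ^ s)
          = ENNReal.ofReal (Real.exp (-(2 * Real.pi * s * (rdot t y + ψ y)))) * c := by
        rw [Real.mul_rpow (norm_nonneg _) (Real.exp_pos _).le]
        rw [← Real.exp_mul]
        rw [ENNReal.ofReal_mul (by positivity)]
        rw [hcdef, ENNReal.ofReal_rpow_of_nonneg (norm_nonneg _) hs.le]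
        rw [mul_comm]
        congr 3
        ring
      calc ENNReal.ofReal (Real.exp (-(2 * Real.pi * s * (rdot t y + ψ y)))) * c
          = ENNReal.ofReal ((‖f t‖ * Real.exp (-(2 * Real.pi * (rdot t y + ψ y)))) ^ s) := hlhs.symm
        _ ≤ ENNReal.ofReal ((I y).toReal ^ s) := ENNReal.ofReal_le_ofReal hb3
        _ = (I y) ^ s := by
            rw [ENNReal.toReal_rpow, ENNReal.ofReal_toReal]
            exact (ENNReal.rpow_lt_top_of_nonneg hs.le hItop).ne
  have hUtop : (∫⁻ y in B, ENNReal.ofReal (Real.exp (-(2 * Real.pi * s * (rdot t y + ψ y))))) = ⊤ := by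
    simpa [Uset, not_lt, top_le_iff] using ht
  have hle : (∫⁻ y in B, ENNReal.ofReal (Real.exp (-(2 * Real.pi * s * (rdot t y + ψ y)))) * c)
      ≤ ∫⁻ y in B, (I y) ^ s :=
    lintegral_mono_ae (ae_restrict_of_forall_mem hBo.measurableSet claim)
  have heq : (∫⁻ y in B, ENNReal.ofReal (Real.exp (-(2 * Real.pi * s * (rdot t y + ψ y)))) * c) = ⊤ := by
    simp_rw [mul_comm _ c]
    rw [lintegral_const_mul' c _ hctop, hUtop, ENNReal.mul_top hc0]
  rw [heq] at hle
  exact absurd hbase (by simp [top_le_iff.mp hle])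

end
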